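/- Let T be a closed, densely defined symmetric operator on a real Hilbert space H. The factor space S = D(T*)/D(T), equipped with the induced pairing [u,v] = (T*u,v) - (u,T*v), is a symplectic space: the pairing is well-defined on equivalence classes, bilinear, skew-symmetric, and non-degenerate. -/

import Mathlib

open scoped RealInnerProductSpace

noncomputable section

namespace FactorAux

variable {H : Type*} [NormedAddCommGroup H] [InnerProductSpace ℝ H] [CompleteSpace H]

/-- The pairing on `D(T*)`. -/
def Bsub (T : H →ₗ.[ℝ] H) : T.adjoint.domain →ₗ[ℝ] T.adjoint.domain →ₗ[ℝ] ℝ :=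
  LinearMap.mk₂ ℝ (fun u v => ⟪T.adjoint u, (v : H)⟫ - ⟪(u : H), T.adjoint v⟫)
    (fun u u' v => by
      simp only [LinearPMap.map_add, Submodule.coe_add, inner_add_left]; ring)
    (fun c u v => by
      simp only [LinearPMap.map_smul, Submodule.coe_smul, inner_smul_left,
        RCLike.conj_to_real, real_inner_smul_left, smul_eq_mul]; ring)
    (fun u v v' => by
      simp only [LinearPMap.map_add, Submodule.coe_add, inner_add_right]; ring)
    (fun c u v => by
      simp only [LinearPMap.map_smul, Submodule.coe_smul, real_inner_smul_right, smul_eq_mul]; ring)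

theorem Bsub_skew (T : H →ₗ.[ℝ] H) (u v : T.adjoint.domain) :
    Bsub T u v = - Bsub T v u := by
  simp only [Bsub, LinearMap.mk₂_apply]
  rw [real_inner_comm (T.adjoint u) (v : H), real_inner_comm (u : H) (T.adjoint v)]
  ring

theorem Bsub_eq_zero_right (T : H →ₗ.[ℝ] H) (hdense : Dense (T.domain : Set H))
    (hsym : ∀ u v : T.domain, ⟪T u, (v : H)⟫ = ⟪(u : H), T v⟫)
    (u v : T.adjoint.domain) (hv : (v : H) ∈ T.domain) : Bsub T u v = 0 := by
  have hle : T ≤ T.adjoint :=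
    LinearPMap.IsFormalAdjoint.le_adjoint hdense (fun x y => hsym x y)
  set v' : T.domain := ⟨(v : H), hv⟩ with hv'
  have h1 : ⟪T.adjoint u, (v : H)⟫ = ⟪(u : H), T v'⟫ :=
    LinearPMap.adjoint_isFormalAdjoint hdense u v'
  have h2 : T v' = T.adjoint v := hle.2 rfl
  simp only [Bsub, LinearMap.mk₂_apply, h1, h2, sub_self]

/-- Key nondegeneracy step: a vector in `D(T*)` pairing trivially with all of `D(T*)`
lies in `D(T)`, by the closedness of `T`. -/
theorem mem_domain_of_pairing_zero (T : H →ₗ.[ℝ] H) (hdense : Dense (T.domain : Set H))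
    (hclosed : T.IsClosed) (u : T.adjoint.domain)
    (hu : ∀ v : T.adjoint.domain, ⟪T.adjoint u, (v : H)⟫ - ⟪(u : H), T.adjoint v⟫ = 0) :
    (u : H) ∈ T.domain := by
  classical
  set W := WithLp 2 (H × H)
  let e : W ≃L[ℝ] H × H := WithLp.prodContinuousLinearEquiv 2 ℝ H H
  let G : Submodule ℝ W := T.graph.comap (e.toLinearEquiv : W →ₗ[ℝ] H × H)
  have hGclosed : IsClosed (G : Set W) := by
    have : (G : Set W) = ⇑e ⁻¹' (T.graph : Set (H × H)) := rfl
    rw [this]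
    exact hclosed.preimage e.continuous
  haveI : CompleteSpace G := hGclosed.completeSpace_coe
  have hGG : Gᗮᗮ = G := Submodule.orthogonal_orthogonal G
  set p : W := (WithLp.equiv 2 (H × H)).symm ((u : H), T.adjoint u) with hp
  have hpmem : p ∈ Gᗮᗮ := by
    rw [Submodule.mem_orthogonal]
    intro w hw
    -- from w ∈ Gᗮ deduce w.snd ∈ D(T*) with T* w.snd = -w.fst
    have h1 : ∀ x : T.domain, ⟪(-w.fst : H), (x : H)⟫ = ⟪w.snd, T x⟫ := by
      intro x
      have hg : ((WithLp.equiv 2 (H × H)).symm ((x : H), T x)) ∈ G := by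
        show ((x : H), T x) ∈ T.graph
        exact T.mem_graph x
      have := (Submodule.mem_orthogonal G w).mp hw _ hg
      rw [WithLp.prod_inner_apply] at this
      simp only [WithLp.equiv_symm_apply, WithLp.ofLp_toLp] at this
      change ⟪(x : H), w.fst⟫ + ⟪T x, w.snd⟫ = 0 at this
      rw [inner_neg_left]
      linarith [real_inner_comm ((x : H)) w.fst, real_inner_comm (T x) w.snd]
    have hd : w.snd ∈ T.adjoint.domain :=
      T.mem_adjoint_domain_of_exists _ ⟨-w.fst, h1⟩
    have he : T.adjoint ⟨w.snd, hd⟩ = -w.fst :=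
      LinearPMap.adjoint_apply_eq hdense _ h1
    have hc := hu ⟨w.snd, hd⟩
    rw [WithLp.prod_inner_apply]
    simp only [hp, WithLp.equiv_symm_apply, WithLp.ofLp_toLp]
    change ⟪w.fst, (u : H)⟫ + ⟪w.snd, T.adjoint u⟫ = 0
    rw [he] at hc
    simp only [inner_neg_right] at hc
    linarith [real_inner_comm ((u : H)) w.fst, real_inner_comm (T.adjoint u) w.snd]
  rw [hGG] at hpmem
  have : ((u : H), T.adjoint u) ∈ T.graph := hpmem
  rw [LinearPMap.mem_graph_iff] at this
  obtain ⟨y, hy1, _⟩ := this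
  have hy : (y : H) = (u : H) := hy1
  exact hy ▸ y.2

end FactorAux

end
/-- For a closed densely defined symmetric operator `T` on a real Hilbert space,
the factor space `D(T*)/D(T)` carries a well-defined bilinear pairing induced by
`[u,v] = ⟪T*u,v⟫ - ⟪u,T*v⟫`, which is skew-symmetric and non-degenerate:
it is a symplectic space. -/
theorem factor_space_symplectic
    {H : Type*} [NormedAddCommGroup H] [InnerProductSpace ℝ H] [CompleteSpace H]
    (T : H →ₗ.[ℝ] H) (hdense : Dense (T.domain : Set H)) (hclosed : T.IsClosed)
    (hsym : ∀ u v : T.domain, ⟪T u, (v : H)⟫ = ⟪(u : H), T v⟫) :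
    ∃ Bq : (T.adjoint.domain ⧸ Submodule.comap T.adjoint.domain.subtype T.domain) →ₗ[ℝ]
        (T.adjoint.domain ⧸ Submodule.comap T.adjoint.domain.subtype T.domain) →ₗ[ℝ] ℝ,
      (∀ u v : T.adjoint.domain,
          Bq (Submodule.Quotient.mk u) (Submodule.Quotient.mk v) =
            ⟪T.adjoint u, (v : H)⟫ - ⟪(u : H), T.adjoint v⟫) ∧
      (∀ x y, Bq x y = - Bq y x) ∧
      (∀ x, (∀ y, Bq x y = 0) → x = 0) := by
  classical
  set N : Submodule ℝ T.adjoint.domain :=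
    Submodule.comap T.adjoint.domain.subtype T.domain with hN
  have hvan : ∀ u v : T.adjoint.domain, v ∈ N → FactorAux.Bsub T u v = 0 := fun u v hv =>
    FactorAux.Bsub_eq_zero_right T hdense hsym u v hv
  have h1 : N ≤ LinearMap.ker (FactorAux.Bsub T) := by
    intro u hu
    rw [LinearMap.mem_ker]
    ext v
    rw [FactorAux.Bsub_skew, hvan v u hu]
    simp
  set L1 : _ →ₗ[ℝ] T.adjoint.domain →ₗ[ℝ] ℝ := Submodule.liftQ N (FactorAux.Bsub T) h1 with hL1
  have h2 : N ≤ LinearMap.ker L1.flip := by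
    intro u hu
    rw [LinearMap.mem_ker]
    ext v
    show L1 (Submodule.Quotient.mk v) u = 0
    rw [hL1, Submodule.liftQ_apply]
    exact hvan v u hu
  set L2 := Submodule.liftQ N L1.flip h2 with hL2
  refine ⟨L2.flip, ?_, ?_, ?_⟩
  · intro u v
    show L2 (Submodule.Quotient.mk v) (Submodule.Quotient.mk u) = _
    rw [hL2, Submodule.liftQ_apply]
    show L1 (Submodule.Quotient.mk u) v = _
    rw [hL1, Submodule.liftQ_apply]
    rfl
  · intro x y
    obtain ⟨u, rfl⟩ := Submodule.Quotient.mk_surjective N x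
    obtain ⟨v, rfl⟩ := Submodule.Quotient.mk_surjective N y
    show L2 (Submodule.Quotient.mk v) (Submodule.Quotient.mk u) =
      - L2 (Submodule.Quotient.mk u) (Submodule.Quotient.mk v)
    rw [hL2]
    simp only [Submodule.liftQ_apply]
    show L1 (Submodule.Quotient.mk u) v = - L1 (Submodule.Quotient.mk v) u
    rw [hL1]
    simp only [Submodule.liftQ_apply]
    exact FactorAux.Bsub_skew T u v
  · intro x hx
    obtain ⟨u, rfl⟩ := Submodule.Quotient.mk_surjective N x
    rw [Submodule.Quotient.mk_eq_zero]
    refine FactorAux.mem_domain_of_pairing_zero T hdense hclosed u ?_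
    intro v
    have := hx (Submodule.Quotient.mk v)
    rw [show (L2.flip (Submodule.Quotient.mk u)) (Submodule.Quotient.mk v) =
      FactorAux.Bsub T u v by rw [LinearMap.flip_apply, hL2, Submodule.liftQ_apply,
        LinearMap.flip_apply, hL1, Submodule.liftQ_apply]] at this
    exact this
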